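/- Let m ≥ 1 be a natural number, let α : Fin m → ℕ with α i ≥ 1 for all i, and let A, B, M, K ≥ 0, P > 0, c > 0 and 0 < q < 1 be real numbers such that for every i, c²·(m·A + M/(α i + 2)) < (α i + 1)²·(α i)·P² − c·(α i + 1)·((α i)·B·m + K). Let e : ℕ → Fin m → ℝ be a sequence of error vectors such that |e 0 i| < c·q^(3^0) for all i, and such that for every k and every i, e (k+1) i = [ (1/(α i + 1)!)·(e k i)²·(∑_{s} A^{[k]}_{i s}·(e k s)) + (1/(α i + 2)!)·Φ^{[k]}_i·(e k i)³ ] / [ (1/(α i − 1)!)·((α i + 1)·(f_i)² + ∑_{s} B^{[k]}_{i s}·(e k s)) + (1/(α i)!)·Ψ^{[k]}_i·(e k i) ], where for all k, i, s the real coefficients satisfy |A^{[k]}_{i s}| ≤ A, |B^{[k]}_{i s}| ≤ B, |Φ^{[k]}_i| ≤ M, |Ψ^{[k]}_i| ≤ K and |f_i| ≥ P. Then for every k ∈ ℕ and every i, |e k i| < c·q^(3^k); in particular e k i → 0 as k → ∞ for every i. -/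

import Mathlib

set_option maxHeartbeats 2000000

/-- Cubic convergence of the generalized Obreshkoff–Ehrlich iteration: the errors,
written via the error representation (12) with uniformly bounded coefficients,
decay like `c * q ^ (3 ^ k)`, and in particular tend to zero. -/
theorem obreshkoff_ehrlich_cubic_convergence
    (m : ℕ) (hm : 1 ≤ m) (α : Fin m → ℕ) (hα : ∀ i, 1 ≤ α i)
    (A B M K P c q : ℝ) (hA : 0 ≤ A) (hB : 0 ≤ B) (hM : 0 ≤ M) (hK : 0 ≤ K)
    (hP : 0 < P) (hc : 0 < c) (hq0 : 0 < q) (hq1 : q < 1)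
    (hineq : ∀ i, c ^ 2 * ((m : ℝ) * A + M / ((α i : ℝ) + 2)) <
      ((α i : ℝ) + 1) ^ 2 * (α i : ℝ) * P ^ 2
        - c * ((α i : ℝ) + 1) * ((α i : ℝ) * B * (m : ℝ) + K))
    (e : ℕ → Fin m → ℝ)
    (he0 : ∀ i, |e 0 i| < c * q ^ (3 ^ 0))
    (Acoef Bcoef : ℕ → Fin m → Fin m → ℝ) (Φ Ψ : ℕ → Fin m → ℝ) (fval : Fin m → ℝ)
    (hAc : ∀ k i s, |Acoef k i s| ≤ A) (hBc : ∀ k i s, |Bcoef k i s| ≤ B)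
    (hΦ : ∀ k i, |Φ k i| ≤ M) (hΨ : ∀ k i, |Ψ k i| ≤ K) (hf : ∀ i, P ≤ |fval i|)
    (hrec : ∀ k i, e (k + 1) i =
      ((1 / ((α i + 1).factorial : ℝ)) * (e k i) ^ 2 * (∑ s, Acoef k i s * e k s)
          + (1 / ((α i + 2).factorial : ℝ)) * Φ k i * (e k i) ^ 3) /
        ((1 / ((α i - 1).factorial : ℝ)) *
            (((α i : ℝ) + 1) * (fval i) ^ 2 + ∑ s, Bcoef k i s * e k s)
          + (1 / ((α i).factorial : ℝ)) * Ψ k i * (e k i))) :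
    (∀ k, ∀ i, |e k i| < c * q ^ (3 ^ k)) ∧
      ∀ i, Filter.Tendsto (fun k => e k i) Filter.atTop (nhds 0) := by
  have main : ∀ k, ∀ i, |e k i| < c * q ^ (3 ^ k) := by
    intro k
    induction k with
    | zero => exact he0
    | succ k ih =>
      intro i
      obtain ⟨b, hab⟩ : ∃ b, α i = b + 1 := ⟨α i - 1, (Nat.succ_pred_eq_of_pos (hα i)).symm⟩
      set ε : ℝ := c * q ^ (3 ^ k) with hεdef
      have hε : 0 < ε := by positivity
      have hεc : ε ≤ c := by
        have h1 : q ^ (3 ^ k) ≤ 1 := pow_le_one₀ hq0.le hq1.le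
        rw [hεdef]
        exact mul_le_of_le_one_right hc.le h1
      have he : ∀ s, |e k s| ≤ ε := fun s => (ih s).le
      have hF : (0:ℝ) < (b.factorial : ℝ) := by exact_mod_cast b.factorial_pos
      have hf1 : (((b + 1).factorial : ℕ) : ℝ) = ((b:ℝ) + 1) * (b.factorial : ℝ) := by
        rw [Nat.factorial_succ]; push_cast; ring
      have hf2 : (((b + 1 + 1).factorial : ℕ) : ℝ)
          = ((b:ℝ) + 2) * (((b:ℝ) + 1) * (b.factorial : ℝ)) := by
        rw [Nat.factorial_succ, Nat.factorial_succ]; push_cast; ring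
      have hf3 : (((b + 1 + 2).factorial : ℕ) : ℝ)
          = ((b:ℝ) + 3) * (((b:ℝ) + 2) * (((b:ℝ) + 1) * (b.factorial : ℝ))) := by
        have h : b + 1 + 2 = (b + 1 + 1) + 1 := by omega
        rw [h, Nat.factorial_succ, Nat.factorial_succ, Nat.factorial_succ]; push_cast; ring
      -- sum bounds
      have hSA : |∑ s, Acoef k i s * e k s| ≤ (m:ℝ) * (A * ε) := by
        calc |∑ s, Acoef k i s * e k s| ≤ ∑ s, |Acoef k i s * e k s| :=
              Finset.abs_sum_le_sum_abs _ _
          _ ≤ ∑ _s : Fin m, A * ε := Finset.sum_le_sum (fun s _ => by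
              rw [abs_mul]
              exact mul_le_mul (hAc k i s) (he s) (abs_nonneg _) hA)
          _ = (m:ℝ) * (A * ε) := by
              simp [Finset.sum_const, Finset.card_univ, nsmul_eq_mul]
      have hSB : |∑ s, Bcoef k i s * e k s| ≤ (m:ℝ) * (B * ε) := by
        calc |∑ s, Bcoef k i s * e k s| ≤ ∑ s, |Bcoef k i s * e k s| :=
              Finset.abs_sum_le_sum_abs _ _
          _ ≤ ∑ _s : Fin m, B * ε := Finset.sum_le_sum (fun s _ => by
              rw [abs_mul]
              exact mul_le_mul (hBc k i s) (he s) (abs_nonneg _) hB)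
          _ = (m:ℝ) * (B * ε) := by
              simp [Finset.sum_const, Finset.card_univ, nsmul_eq_mul]
      -- the recurrence with explicit factorials
      have hstep := hrec k i
      rw [hab] at hstep
      simp only [Nat.add_sub_cancel] at hstep
      rw [hf1, hf2, hf3] at hstep
      push_cast at hstep
      -- the inequality hypothesis
      have hi := hineq i
      rw [hab] at hi
      push_cast at hi
      have hb1 : (0:ℝ) < (b:ℝ) + 1 := by positivity
      have hb2 : (0:ℝ) < (b:ℝ) + 2 := by positivity
      have hb3 : (0:ℝ) < (b:ℝ) + 3 := by positivity
      set D1 : ℝ := ((b:ℝ) + 2) * (((b:ℝ) + 1) * P ^ 2)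
          - ε * (((b:ℝ) + 1) * ((m:ℝ) * B) + K) with hD1def
      have hcn : 0 ≤ (c - ε) * (((b:ℝ) + 1) * ((m:ℝ) * B) + K) :=
        mul_nonneg (sub_nonneg.mpr hεc) (by positivity)
      have hMd : (0:ℝ) ≤ M / ((b:ℝ) + 1 + 2) := by positivity
      have hmA : (0:ℝ) ≤ (m:ℝ) * A := by positivity
      have hLHSnn : (0:ℝ) ≤ c ^ 2 * ((m:ℝ) * A + M / ((b:ℝ) + 1 + 2)) := by positivity
      have hT : 0 < ((b:ℝ) + 2) * (((b:ℝ) + 1) * P ^ 2)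
          - c * (((b:ℝ) + 1) * ((m:ℝ) * B) + K) := by
        nlinarith only [hi, hLHSnn, hb2, sq_nonneg P, sq_nonneg c]
      have hD1pos : 0 < D1 := by
        rw [hD1def]; linarith only [hT, hcn]
      have h1 := mul_lt_mul_of_pos_left hi hb3
      have hMdiv2 : c ^ 2 * (M / ((b:ℝ) + 1 + 2) * ((b:ℝ) + 1 + 2)) = c ^ 2 * M := by
        rw [div_mul_cancel₀ M (by positivity : ((b:ℝ) + 1 + 2) ≠ 0)]
      have hkey : c ^ 2 * ((m:ℝ) * A * ((b:ℝ) + 3) + M)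
          < ((b:ℝ) + 3) * (((b:ℝ) + 2) * D1) := by
        rw [hD1def]
        have e0 : c ^ 2 * ((m:ℝ) * A * ((b:ℝ) + 3) + M)
            = ((b:ℝ) + 3) * (c ^ 2 * ((m:ℝ) * A + M / ((b:ℝ) + 1 + 2))) := by
          field_simp; ring
        have e1 : ((b:ℝ) + 3) * (((b:ℝ) + 1 + 1) ^ 2 * ((b:ℝ) + 1) * P ^ 2
              - c * ((b:ℝ) + 1 + 1) * (((b:ℝ) + 1) * B * (m:ℝ) + K))
            + ((b:ℝ) + 3) * (((b:ℝ) + 2) * ((c - ε) * (((b:ℝ) + 1) * ((m:ℝ) * B) + K)))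
            = ((b:ℝ) + 3) * (((b:ℝ) + 2) * (((b:ℝ) + 2) * (((b:ℝ) + 1) * P ^ 2)
              - ε * (((b:ℝ) + 1) * ((m:ℝ) * B) + K))) := by ring
        calc c ^ 2 * ((m:ℝ) * A * ((b:ℝ) + 3) + M)
            = ((b:ℝ) + 3) * (c ^ 2 * ((m:ℝ) * A + M / ((b:ℝ) + 1 + 2))) := e0
          _ < ((b:ℝ) + 3) * (((b:ℝ) + 1 + 1) ^ 2 * ((b:ℝ) + 1) * P ^ 2
              - c * ((b:ℝ) + 1 + 1) * (((b:ℝ) + 1) * B * (m:ℝ) + K)) := h1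
          _ ≤ _ := by
              rw [← e1]
              exact le_add_of_nonneg_right
                (mul_nonneg hb3.le (mul_nonneg hb2.le hcn))
      -- abbreviations
      set F : ℝ := (b.factorial : ℝ) with hFdef
      set SA : ℝ := ∑ s : Fin m, Acoef k i s * e k s with hSAdef
      set SB : ℝ := ∑ s : Fin m, Bcoef k i s * e k s with hSBdef
      set NUM : ℝ := 1 / (((b:ℝ) + 2) * (((b:ℝ) + 1) * F)) * e k i ^ 2 * SA +
          1 / (((b:ℝ) + 3) * (((b:ℝ) + 2) * (((b:ℝ) + 1) * F))) * Φ k i * e k i ^ 3 with hNUMdef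
      set DEN : ℝ := 1 / F * (((b:ℝ) + 1 + 1) * fval i ^ 2 + SB) +
          1 / (((b:ℝ) + 1) * F) * Ψ k i * e k i with hDENdef
      -- numerator bound
      have hn1 : |1 / (((b:ℝ) + 2) * (((b:ℝ) + 1) * F)) * e k i ^ 2 * SA|
          ≤ 1 / (((b:ℝ) + 2) * (((b:ℝ) + 1) * F)) * ε ^ 2 * ((m:ℝ) * (A * ε)) := by
        rw [abs_mul, abs_mul, abs_pow, abs_of_pos (by positivity)]
        gcongr
        all_goals first
          | exact he i
          | exact hSA
          | exact hSB
          | exact hΦ k i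
          | exact hΨ k i
          | exact hfv
      have hn2 : |1 / (((b:ℝ) + 3) * (((b:ℝ) + 2) * (((b:ℝ) + 1) * F))) * Φ k i * e k i ^ 3|
          ≤ 1 / (((b:ℝ) + 3) * (((b:ℝ) + 2) * (((b:ℝ) + 1) * F))) * M * ε ^ 3 := by
        rw [abs_mul, abs_mul, abs_pow, abs_of_pos (by positivity)]
        gcongr
        all_goals first
          | exact he i
          | exact hSA
          | exact hSB
          | exact hΦ k i
          | exact hΨ k i
          | exact hfv
      have hnum : |NUM| ≤ 1 / (((b:ℝ) + 2) * (((b:ℝ) + 1) * F)) * ε ^ 2 * ((m:ℝ) * (A * ε))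
          + 1 / (((b:ℝ) + 3) * (((b:ℝ) + 2) * (((b:ℝ) + 1) * F))) * M * ε ^ 3 :=
        (abs_add_le _ _).trans (add_le_add hn1 hn2)
      -- denominator bound
      have hfv : P ^ 2 ≤ fval i ^ 2 := by nlinarith only [hf i, sq_abs (fval i), hP, abs_nonneg (fval i)]
      have ht1 : |1 / F * SB| ≤ 1 / F * ((m:ℝ) * (B * ε)) := by
        rw [abs_mul, abs_of_pos (by positivity)]
        gcongr
        all_goals first
          | exact he i
          | exact hSA
          | exact hSB
          | exact hΦ k i
          | exact hΨ k i
          | exact hfv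
      have ht2 : |1 / (((b:ℝ) + 1) * F) * Ψ k i * e k i|
          ≤ 1 / (((b:ℝ) + 1) * F) * K * ε := by
        rw [abs_mul, abs_mul, abs_of_pos (by positivity)]
        gcongr
        all_goals first
          | exact he i
          | exact hSA
          | exact hSB
          | exact hΦ k i
          | exact hΨ k i
          | exact hfv
      have hsplit : 1 / F * (((b:ℝ) + 1 + 1) * fval i ^ 2)
          = DEN - (1 / F * SB + 1 / (((b:ℝ) + 1) * F) * Ψ k i * e k i) := by
        rw [hDENdef]; ring
      have key1 : 1 / F * (((b:ℝ) + 1 + 1) * fval i ^ 2)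
          ≤ |DEN| + |1 / F * SB + 1 / (((b:ℝ) + 1) * F) * Ψ k i * e k i| := by
        calc 1 / F * (((b:ℝ) + 1 + 1) * fval i ^ 2)
            = |1 / F * (((b:ℝ) + 1 + 1) * fval i ^ 2)| := (abs_of_nonneg (by positivity)).symm
          _ = |DEN - (1 / F * SB + 1 / (((b:ℝ) + 1) * F) * Ψ k i * e k i)| := by rw [hsplit]
          _ ≤ _ := abs_sub _ _
      have hrest : |1 / F * SB + 1 / (((b:ℝ) + 1) * F) * Ψ k i * e k i|
          ≤ 1 / F * ((m:ℝ) * (B * ε)) + 1 / (((b:ℝ) + 1) * F) * K * ε :=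
        (abs_add_le _ _).trans (add_le_add ht1 ht2)
      have heq : D1 / (((b:ℝ) + 1) * F)
          = 1 / F * (((b:ℝ) + 1 + 1) * P ^ 2)
            - (1 / F * ((m:ℝ) * (B * ε)) + 1 / (((b:ℝ) + 1) * F) * K * ε) := by
        rw [hD1def, hFdef]; field_simp; ring
      have hfv2 : 1 / F * (((b:ℝ) + 1 + 1) * P ^ 2) ≤ 1 / F * (((b:ℝ) + 1 + 1) * fval i ^ 2) := by
        gcongr
        all_goals first
          | exact he i
          | exact hSA
          | exact hSB
          | exact hΦ k i
          | exact hΨ k i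
          | exact hfv
      have hdlow : D1 / (((b:ℝ) + 1) * F) ≤ |DEN| := by linarith only [key1, hrest, heq, hfv2]
      have hdpos : 0 < |DEN| :=
        lt_of_lt_of_le (div_pos hD1pos (by positivity)) hdlow
      -- comparison
      have hcmp : 1 / (((b:ℝ) + 2) * (((b:ℝ) + 1) * F)) * ε ^ 2 * ((m:ℝ) * (A * ε))
          + 1 / (((b:ℝ) + 3) * (((b:ℝ) + 2) * (((b:ℝ) + 1) * F))) * M * ε ^ 3
          < ε ^ 3 / c ^ 2 * (D1 / (((b:ℝ) + 1) * F)) := by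
        have e1 : 1 / (((b:ℝ) + 2) * (((b:ℝ) + 1) * F)) * ε ^ 2 * ((m:ℝ) * (A * ε))
            + 1 / (((b:ℝ) + 3) * (((b:ℝ) + 2) * (((b:ℝ) + 1) * F))) * M * ε ^ 3
            = ε ^ 3 * ((m:ℝ) * A * ((b:ℝ) + 3) + M)
              / (((b:ℝ) + 3) * (((b:ℝ) + 2) * (((b:ℝ) + 1) * F))) := by
          rw [hFdef]; field_simp
        have e2 : ε ^ 3 / c ^ 2 * (D1 / (((b:ℝ) + 1) * F))
            = ε ^ 3 * (((b:ℝ) + 3) * (((b:ℝ) + 2) * D1))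
              / (c ^ 2 * (((b:ℝ) + 3) * (((b:ℝ) + 2) * (((b:ℝ) + 1) * F)))) := by
          rw [hFdef]; field_simp
        rw [e1, e2, div_lt_div_iff₀ (by positivity) (by positivity)]
        have h6 := mul_lt_mul_of_pos_right (mul_lt_mul_of_pos_left hkey (pow_pos hε 3))
          (show (0:ℝ) < ((b:ℝ) + 3) * (((b:ℝ) + 2) * (((b:ℝ) + 1) * F)) by positivity)
        linarith only [h6]
      -- conclude
      have hεq : c * q ^ 3 ^ (k + 1) = ε ^ 3 / c ^ 2 := by
        rw [hεdef, pow_succ, pow_mul]; field_simp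
      rw [hstep, abs_div, div_lt_iff₀ hdpos, hεq]
      calc |NUM| ≤ _ := hnum
        _ < ε ^ 3 / c ^ 2 * (D1 / (((b:ℝ) + 1) * F)) := hcmp
        _ ≤ ε ^ 3 / c ^ 2 * |DEN| := by gcongr
  refine ⟨main, fun i => ?_⟩
  have hb : Filter.Tendsto (fun k : ℕ => c * q ^ (3 ^ k)) Filter.atTop (nhds 0) := by
    have h1 : Filter.Tendsto (fun n : ℕ => q ^ n) Filter.atTop (nhds 0) :=
      tendsto_pow_atTop_nhds_zero_of_lt_one hq0.le hq1
    have h2 : Filter.Tendsto (fun k : ℕ => 3 ^ k) Filter.atTop Filter.atTop :=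
      tendsto_pow_atTop_atTop_of_one_lt (by norm_num)
    have h3 := (h1.comp h2).const_mul c
    simpa using h3
  exact squeeze_zero_norm (fun k => by
    simpa [Real.norm_eq_abs] using (main k i).le) hb
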